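/- Full layered decomposition of the Hadamard matrix (Proposition 4): for N = 2^L with L ≥ 1, H_N = P_L·D·P_{L−1}·D·⋯·P_1·D·P_0, where D = I_{2^{L−1}} ⊗ H_2 (the same block diagonal matrix in every layer), P_ℓ = (I_{2^{L−ℓ−1}} ⊗ P̃_{2^{ℓ+1}}^T)·(I_{2^{L−ℓ}} ⊗ P̃_{2^ℓ}) for ℓ = 0,…,L−1, and P_L = P̃_{2^L}. All the P_ℓ are permutation matrices. -/

import Mathlib

open Matrix Complex

/-- Cast a square matrix along an equality of sizes. -/
noncomputable def castM {m n : ℕ} (h : m = n) (A : Matrix (Fin m) (Fin m) ℂ) :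
    Matrix (Fin n) (Fin n) ℂ :=
  Matrix.reindex (finCongr h) (finCongr h) A

/-- Kronecker product of two square matrices, with row-major flattened indices. -/
noncomputable def kronF {m n : ℕ} (A : Matrix (Fin m) (Fin m) ℂ)
    (B : Matrix (Fin n) (Fin n) ℂ) : Matrix (Fin (m * n)) (Fin (m * n)) ℂ :=
  Matrix.reindex finProdFinEquiv finProdFinEquiv (Matrix.kroneckerMap (· * ·) A B)

/-- The odd-even permutation matrix `P̃_N` (0-based indices):
`[P̃_N]_{i,k} = 1` iff (`2i < N` and `k = 2i`) or (`2i ≥ N` and `k = 2i+1−N`). -/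
noncomputable def oddEvenPerm (N : ℕ) : Matrix (Fin N) (Fin N) ℂ :=
  Matrix.of fun i k =>
    if (2 * i.val < N ∧ k.val = 2 * i.val) ∨ (N ≤ 2 * i.val ∧ k.val = 2 * i.val + 1 - N)
    then 1 else 0

/-- The base 2×2 Hadamard matrix `H_2 = (1/√2)·[[1,1],[1,−1]]`. -/
noncomputable def H2 : Matrix (Fin 2) (Fin 2) ℂ :=
  (1 / (Real.sqrt 2 : ℂ)) • !![1, 1; 1, -1]

/-- The Hadamard matrices: `H_1 = 1` and `H_{2^{L+1}} = H_2 ⊗ H_{2^L}`. -/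
noncomputable def hadamardMat : (L : ℕ) → Matrix (Fin (2 ^ L)) (Fin (2 ^ L)) ℂ
  | 0 => 1
  | L + 1 => castM (by ring) (kronF H2 (hadamardMat L))

/-- `I_{N/M} ⊗ A` for an `M×M` matrix `A` (intended for `M ∣ N`), written entrywise. -/
noncomputable def IkronM (N : ℕ) {M : ℕ} (A : Matrix (Fin M) (Fin M) ℂ) :
    Matrix (Fin N) (Fin N) ℂ :=
  Matrix.of fun i k =>
    if hM : 0 < M then
      if i.val / M = k.val / M then
        A ⟨i.val % M, Nat.mod_lt _ hM⟩ ⟨k.val % M, Nat.mod_lt _ hM⟩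
      else 0
    else 0

/-- A matrix is a permutation matrix if it is the 0/1 matrix of some permutation. -/
def IsPermutationMatrix {n : ℕ} (A : Matrix (Fin n) (Fin n) ℂ) : Prop :=
  ∃ σ : Equiv.Perm (Fin n), ∀ i k, A i k = if σ i = k then 1 else 0

/-- The permutation matrices `P_ℓ` of Proposition 4:
`P_ℓ = (I_{2^{L−ℓ−1}} ⊗ P̃_{2^{ℓ+1}}ᵀ)·(I_{2^{L−ℓ}} ⊗ P̃_{2^ℓ})` for `0 ≤ ℓ ≤ L−1`,
and `P_L = P̃_{2^L}`. -/
noncomputable def hadP (L ℓ : ℕ) : Matrix (Fin (2 ^ L)) (Fin (2 ^ L)) ℂ :=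
  if ℓ = L then oddEvenPerm (2 ^ L)
  else IkronM (2 ^ L) ((oddEvenPerm (2 ^ (ℓ + 1)))ᵀ) * IkronM (2 ^ L) (oddEvenPerm (2 ^ ℓ))

/-! ### Permutation matrix toolkit -/

lemma IsPermutationMatrix.transpose' {n : ℕ} {A : Matrix (Fin n) (Fin n) ℂ}
    (h : IsPermutationMatrix A) : IsPermutationMatrix Aᵀ := by
  obtain ⟨σ, hσ⟩ := h
  refine ⟨σ.symm, fun i k => ?_⟩
  rw [Matrix.transpose_apply, hσ]
  congr 1
  rw [eq_iff_iff]
  constructor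
  · intro h; rw [← h]; exact (σ.symm_apply_apply k).symm ▸ rfl
  · intro h; rw [← h]; exact σ.apply_symm_apply i

lemma perm_mul_apply {n : ℕ} {A : Matrix (Fin n) (Fin n) ℂ} {σ : Equiv.Perm (Fin n)}
    (hA : ∀ i k, A i k = if σ i = k then 1 else 0) (X : Matrix (Fin n) (Fin n) ℂ)
    (i k : Fin n) : (A * X) i k = X (σ i) k := by
  rw [Matrix.mul_apply]
  rw [Finset.sum_congr rfl (fun j _ => by rw [hA, ite_mul, one_mul, zero_mul])]
  rw [Finset.sum_ite_eq]
  simp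

lemma mul_permT_apply {n : ℕ} {A : Matrix (Fin n) (Fin n) ℂ} {σ : Equiv.Perm (Fin n)}
    (hA : ∀ i k, A i k = if σ i = k then 1 else 0) (X : Matrix (Fin n) (Fin n) ℂ)
    (i k : Fin n) : (X * Aᵀ) i k = X i (σ k) := by
  rw [Matrix.mul_apply]
  rw [Finset.sum_congr rfl (fun j _ => by
    rw [Matrix.transpose_apply, hA, mul_ite, mul_one, mul_zero])]
  rw [Finset.sum_ite_eq]
  simp

lemma IsPermutationMatrix.mul' {n : ℕ} {A B : Matrix (Fin n) (Fin n) ℂ}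
    (hA : IsPermutationMatrix A) (hB : IsPermutationMatrix B) :
    IsPermutationMatrix (A * B) := by
  obtain ⟨σ, hσ⟩ := hA
  obtain ⟨τ, hτ⟩ := hB
  refine ⟨σ.trans τ, fun i k => ?_⟩
  rw [perm_mul_apply hσ, hτ]
  rfl

lemma IsPermutationMatrix.mul_transpose_self {n : ℕ} {A : Matrix (Fin n) (Fin n) ℂ}
    (h : IsPermutationMatrix A) : A * Aᵀ = 1 := by
  obtain ⟨σ, hσ⟩ := h
  ext i k
  rw [mul_permT_apply hσ, hσ, Matrix.one_apply]
  congr 1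
  rw [eq_iff_iff, σ.apply_eq_iff_eq]

lemma IsPermutationMatrix.transpose_mul_self {n : ℕ} {A : Matrix (Fin n) (Fin n) ℂ}
    (h : IsPermutationMatrix A) : Aᵀ * A = 1 := by
  have h2 := h.transpose'.mul_transpose_self
  rwa [Matrix.transpose_transpose] at h2
/-! ### IkronM toolkit -/

/-- Split `Fin N` as `Fin (N/M) × Fin M` when `M ∣ N`. -/
def eNM {N M : ℕ} (hMN : M ∣ N) : Fin (N / M) × Fin M ≃ Fin N :=
  finProdFinEquiv.trans (finCongr (Nat.div_mul_cancel hMN))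

lemma eNM_val {N M : ℕ} (hMN : M ∣ N) (x : Fin (N / M) × Fin M) :
    ((eNM hMN x : Fin N) : ℕ) = x.2.val + M * x.1.val := rfl

lemma eNM_div {N M : ℕ} (hM : 0 < M) (hMN : M ∣ N) (x : Fin (N / M) × Fin M) :
    ((eNM hMN x : Fin N) : ℕ) / M = x.1.val := by
  rw [eNM_val, Nat.add_mul_div_left _ _ hM, Nat.div_eq_of_lt x.2.isLt, Nat.zero_add]

lemma eNM_mod {N M : ℕ} (hMN : M ∣ N) (x : Fin (N / M) × Fin M) :
    ((eNM hMN x : Fin N) : ℕ) % M = x.2.val := by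
  rw [eNM_val, Nat.add_mul_mod_self_left, Nat.mod_eq_of_lt x.2.isLt]

lemma IkronM_apply {N M : ℕ} (hM : 0 < M) (A : Matrix (Fin M) (Fin M) ℂ) (i k : Fin N) :
    IkronM N A i k =
      if i.val / M = k.val / M then
        A ⟨i.val % M, Nat.mod_lt _ hM⟩ ⟨k.val % M, Nat.mod_lt _ hM⟩
      else 0 := by
  simp [IkronM, hM]

lemma IkronM_transpose {N M : ℕ} (hM : 0 < M) (A : Matrix (Fin M) (Fin M) ℂ) :
    IkronM N Aᵀ = (IkronM N A)ᵀ := by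
  ext i k
  rw [Matrix.transpose_apply, IkronM_apply hM, IkronM_apply hM]
  rcases eq_or_ne (i.val / M) (k.val / M) with h | h
  · rw [if_pos h, if_pos h.symm, Matrix.transpose_apply]
  · rw [if_neg h, if_neg (Ne.symm h)]

lemma IkronM_one {N M : ℕ} (hM : 0 < M) :
    IkronM N (1 : Matrix (Fin M) (Fin M) ℂ) = 1 := by
  ext i k
  rw [IkronM_apply hM]
  simp only [Matrix.one_apply]
  rcases eq_or_ne i k with h | h
  · subst h; simp
  · rw [if_neg h]
    split_ifs with h1 h2
    · exfalso
      apply h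
      have h2' : i.val % M = k.val % M := by simpa [Fin.ext_iff] using h2
      have e1 := Nat.div_add_mod i.val M
      have e2 := Nat.div_add_mod k.val M
      rw [h1] at e1
      rw [h2'] at e1
      exact Fin.ext (by omega)
    · rfl
    · rfl

lemma sum_split {N M : ℕ} (hMN : M ∣ N) (f : Fin N → ℂ) :
    ∑ j : Fin N, f j = ∑ q : Fin (N / M), ∑ r : Fin M, f (eNM hMN (q, r)) := by
  rw [← Equiv.sum_comp (eNM hMN) f, Fintype.sum_prod_type]

lemma IkronM_mul {N M : ℕ} (hM : 0 < M) (hMN : M ∣ N) (A B : Matrix (Fin M) (Fin M) ℂ) :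
    IkronM N A * IkronM N B = IkronM N (A * B) := by
  ext i k
  rw [Matrix.mul_apply, IkronM_apply hM, sum_split hMN]
  have key : ∀ (q : Fin (N / M)) (r : Fin M),
      IkronM N A i (eNM hMN (q, r)) * IkronM N B (eNM hMN (q, r)) k =
        (if i.val / M = q.val then
          A ⟨i.val % M, Nat.mod_lt _ hM⟩ r else 0) *
        (if q.val = k.val / M then
          B r ⟨k.val % M, Nat.mod_lt _ hM⟩ else 0) := by
    intro q r
    have hr : (⟨((eNM hMN (q, r) : Fin N) : ℕ) % M, Nat.mod_lt _ hM⟩ : Fin M) = r :=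
      Fin.ext (eNM_mod hMN (q, r))
    rw [IkronM_apply hM, IkronM_apply hM, hr, eNM_div hM hMN]
  rw [Finset.sum_congr rfl fun q _ => Finset.sum_congr rfl fun r _ => key q r]
  by_cases h : i.val / M = k.val / M
  · rw [if_pos h, Matrix.mul_apply]
    have hq : i.val / M < N / M := Nat.div_lt_div_of_lt_of_dvd hMN i.isLt
    have step : ∀ q : Fin (N / M),
        (∑ r : Fin M,
          (if i.val / M = q.val then A ⟨i.val % M, Nat.mod_lt _ hM⟩ r else 0) *
          (if q.val = k.val / M then B r ⟨k.val % M, Nat.mod_lt _ hM⟩ else 0)) =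
        if (⟨i.val / M, hq⟩ : Fin (N / M)) = q then
          ∑ r : Fin M, A ⟨i.val % M, Nat.mod_lt _ hM⟩ r * B r ⟨k.val % M, Nat.mod_lt _ hM⟩
        else 0 := by
      intro q
      rcases eq_or_ne (i.val / M) q.val with h1 | h1
      · rw [if_pos (Fin.ext h1)]
        refine Finset.sum_congr rfl fun r _ => ?_
        rw [if_pos h1, if_pos (h1.symm.trans h)]
      · rw [if_neg (fun hc => h1 (by simpa [Fin.ext_iff] using hc))]
        refine Finset.sum_eq_zero fun r _ => ?_
        rw [if_neg h1, zero_mul]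
    rw [Finset.sum_congr rfl fun q _ => step q, Finset.sum_ite_eq,
      if_pos (Finset.mem_univ _)]
  · rw [if_neg h]
    refine Finset.sum_eq_zero fun q _ => Finset.sum_eq_zero fun r _ => ?_
    rcases eq_or_ne (i.val / M) q.val with h1 | h1
    · rw [if_neg (fun hc => h (h1.trans hc)), mul_zero]
    · rw [if_neg h1, zero_mul]

lemma div_decomp {K M : ℕ} (hK : 0 < K) (hKM : K ∣ M) (i : ℕ) :
    i / K = i % M / K + M / K * (i / M) := by
  conv_lhs => rw [← Nat.mod_add_div i M]
  rw [show M * (i / M) = K * (M / K * (i / M)) by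
    rw [← Nat.mul_assoc, Nat.mul_div_cancel' hKM]]
  rw [Nat.add_mul_div_left _ _ hK]

lemma IkronM_IkronM {N M K : ℕ} (hK : 0 < K) (hM : 0 < M) (hKM : K ∣ M)
    (A : Matrix (Fin K) (Fin K) ℂ) :
    IkronM N (IkronM M A) = IkronM N A := by
  have hMK : 0 < M / K := Nat.div_pos (Nat.le_of_dvd hM hKM) hK
  ext i k
  have L1 : IkronM N (IkronM M A) i k =
      if i.val / M = k.val / M then
        IkronM M A ⟨i.val % M, Nat.mod_lt _ hM⟩ ⟨k.val % M, Nat.mod_lt _ hM⟩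
      else 0 := IkronM_apply hM _ i k
  have L2 : IkronM M A ⟨i.val % M, Nat.mod_lt _ hM⟩ ⟨k.val % M, Nat.mod_lt _ hM⟩ =
      if i.val % M / K = k.val % M / K then
        A ⟨i.val % M % K, Nat.mod_lt _ hK⟩ ⟨k.val % M % K, Nat.mod_lt _ hK⟩
      else 0 := IkronM_apply hK A _ _
  rw [L1, L2, IkronM_apply hK A i k]
  have modmod : ∀ j : ℕ, j % M % K = j % K := fun j => Nat.mod_mod_of_dvd j hKM
  have hi := div_decomp hK hKM i.val
  have hk := div_decomp hK hKM k.val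
  have hilt : i.val % M / K < M / K := Nat.div_lt_div_of_lt_of_dvd hKM (Nat.mod_lt _ hM)
  have hklt : k.val % M / K < M / K := Nat.div_lt_div_of_lt_of_dvd hKM (Nat.mod_lt _ hM)
  have hcond : (i.val / M = k.val / M ∧ i.val % M / K = k.val % M / K) ↔
      i.val / K = k.val / K := by
    constructor
    · rintro ⟨h1, h2⟩
      rw [hi, hk, h1, h2]
    · intro h
      rw [hi, hk] at h
      have h1 : i.val / M = k.val / M := by
        have e1 : (i.val % M / K + M / K * (i.val / M)) / (M / K) = i.val / M := by
          rw [Nat.add_mul_div_left _ _ hMK, Nat.div_eq_of_lt hilt, Nat.zero_add]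
        have e2 : (k.val % M / K + M / K * (k.val / M)) / (M / K) = k.val / M := by
          rw [Nat.add_mul_div_left _ _ hMK, Nat.div_eq_of_lt hklt, Nat.zero_add]
        rw [← e1, ← e2, h]
      refine ⟨h1, ?_⟩
      rw [h1] at h
      exact Nat.add_right_cancel (by rw [h])
  have hargs : (⟨i.val % M % K, Nat.mod_lt _ hK⟩ : Fin K) = ⟨i.val % K, Nat.mod_lt _ hK⟩ :=
    Fin.ext (modmod _)
  have hargs' : (⟨k.val % M % K, Nat.mod_lt _ hK⟩ : Fin K) = ⟨k.val % K, Nat.mod_lt _ hK⟩ :=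
    Fin.ext (modmod _)
  rw [hargs, hargs']
  by_cases h : i.val / K = k.val / K
  · rw [if_pos h, if_pos (hcond.2 h).1, if_pos (hcond.2 h).2]
  · rw [if_neg h]
    by_cases h1 : i.val / M = k.val / M
    · rw [if_pos h1, if_neg (fun h2 => h (hcond.1 ⟨h1, h2⟩))]
    · rw [if_neg h1]

lemma IkronM_self {M : ℕ} (hM : 0 < M) (A : Matrix (Fin M) (Fin M) ℂ) :
    IkronM M A = A := by
  ext i k
  rw [IkronM_apply hM, if_pos (by rw [Nat.div_eq_of_lt i.isLt, Nat.div_eq_of_lt k.isLt])]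
  congr 1 <;> exact Fin.ext (Nat.mod_eq_of_lt (Fin.isLt _))

lemma eNM_symm {N M : ℕ} (hM : 0 < M) (hMN : M ∣ N) (i : Fin N) :
    (eNM hMN).symm i = (⟨i.val / M, Nat.div_lt_div_of_lt_of_dvd hMN i.isLt⟩,
      ⟨i.val % M, Nat.mod_lt _ hM⟩) := by
  rw [Equiv.symm_apply_eq]
  exact Fin.ext (by rw [eNM_val]; exact (Nat.mod_add_div _ _).symm ▸ (Nat.mod_add_div i.val M))

lemma IkronM_perm {N M : ℕ} (hM : 0 < M) (hMN : M ∣ N) {A : Matrix (Fin M) (Fin M) ℂ}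
    (h : IsPermutationMatrix A) : IsPermutationMatrix (IkronM N A) := by
  obtain ⟨σ, hσ⟩ := h
  refine ⟨((eNM hMN).symm.trans ((Equiv.refl _).prodCongr σ)).trans (eNM hMN),
    fun i k => ?_⟩
  rw [IkronM_apply hM]
  simp only [Equiv.trans_apply, Equiv.prodCongr_apply, eNM_symm hM hMN, Prod.map,
    Equiv.refl_apply]
  have hval : ((eNM hMN ((⟨i.val / M, Nat.div_lt_div_of_lt_of_dvd hMN i.isLt⟩ : Fin (N/M)),
      σ ⟨i.val % M, Nat.mod_lt _ hM⟩) : Fin N) : ℕ)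
      = (σ ⟨i.val % M, Nat.mod_lt _ hM⟩).val + M * (i.val / M) := eNM_val hMN _
  have hcond : (eNM hMN (⟨i.val / M, Nat.div_lt_div_of_lt_of_dvd hMN i.isLt⟩,
      σ ⟨i.val % M, Nat.mod_lt _ hM⟩)) = k ↔
      (i.val / M = k.val / M ∧ σ ⟨i.val % M, Nat.mod_lt _ hM⟩ = ⟨k.val % M, Nat.mod_lt _ hM⟩) := by
    rw [Fin.ext_iff, hval]
    constructor
    · intro hc
      have hlt : (σ ⟨i.val % M, Nat.mod_lt _ hM⟩).val < M := Fin.isLt _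
      constructor
      · rw [← hc, Nat.add_mul_div_left _ _ hM, Nat.div_eq_of_lt hlt, Nat.zero_add]
      · refine Fin.ext ?_
        show (σ ⟨i.val % M, Nat.mod_lt _ hM⟩).val = k.val % M
        rw [← hc, Nat.add_mul_mod_self_left, Nat.mod_eq_of_lt hlt]
    · rintro ⟨h1, h2⟩
      rw [h2, h1]
      simp only []
      exact (Nat.mod_add_div k.val M)
  rcases eq_or_ne (i.val / M) (k.val / M) with h1 | h1
  · rw [if_pos h1, hσ]
    rcases eq_or_ne (σ ⟨i.val % M, Nat.mod_lt _ hM⟩) (⟨k.val % M, Nat.mod_lt _ hM⟩ : Fin M)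
      with h2 | h2
    · rw [if_pos h2, if_pos (hcond.2 ⟨h1, h2⟩)]
    · rw [if_neg h2, if_neg (fun hc => h2 (hcond.1 hc).2)]
  · rw [if_neg h1, if_neg (fun hc => h1 (hcond.1 hc).1)]

/-! ### The odd-even permutation -/

/-- The permutation underlying `oddEvenPerm M` (for `M` even or `M = 1`). -/
def oeEquiv (M : ℕ) (hM : M % 2 = 0 ∨ M = 1) : Equiv.Perm (Fin M) where
  toFun i := ⟨if 2 * i.val < M then 2 * i.val else 2 * i.val + 1 - M, by
    have := i.isLt; split_ifs <;> omega⟩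
  invFun k := ⟨if k.val % 2 = 0 then k.val / 2 else (k.val + M) / 2, by
    have := k.isLt; split_ifs <;> omega⟩
  left_inv i := by
    have := i.isLt
    apply Fin.ext
    simp only
    split_ifs <;> omega
  right_inv k := by
    have := k.isLt
    apply Fin.ext
    simp only
    split_ifs <;> omega

lemma oeEquiv_val {M : ℕ} (hM : M % 2 = 0 ∨ M = 1) (i : Fin M) :
    (oeEquiv M hM i).val = if 2 * i.val < M then 2 * i.val else 2 * i.val + 1 - M := rfl

lemma oddEvenPerm_entry (M : ℕ) (hM : M % 2 = 0 ∨ M = 1) (i k : Fin M) :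
    oddEvenPerm M i k = if oeEquiv M hM i = k then 1 else 0 := by
  rw [oddEvenPerm, Matrix.of_apply]
  congr 1
  rw [eq_iff_iff, Fin.ext_iff, oeEquiv_val]
  have := i.isLt
  have := k.isLt
  split_ifs <;> omega

lemma oddEvenPerm_isPerm (M : ℕ) (hM : M % 2 = 0 ∨ M = 1) :
    IsPermutationMatrix (oddEvenPerm M) :=
  ⟨oeEquiv M hM, oddEvenPerm_entry M hM⟩

lemma pow_hyp (ℓ : ℕ) : 2 ^ ℓ % 2 = 0 ∨ 2 ^ ℓ = 1 := by
  cases ℓ with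
  | zero => right; rfl
  | succ s => left; rw [pow_succ]; omega

lemma oddEvenPerm_one : oddEvenPerm 1 = 1 := by
  ext i k
  fin_cases i <;> fin_cases k <;> simp [oddEvenPerm]

lemma oddEvenPerm_two : oddEvenPerm 2 = 1 := by
  ext i k
  fin_cases i <;> fin_cases k <;> simp [oddEvenPerm]

/-! ### The block `H2 ⊗ I` -/

/-- `H_2 ⊗ I_{2^s}`, written entrywise on `Fin (2^(s+1))`. -/
noncomputable def blk (s : ℕ) : Matrix (Fin (2 ^ (s + 1))) (Fin (2 ^ (s + 1))) ℂ :=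
  Matrix.of fun i k =>
    if i.val % 2 ^ s = k.val % 2 ^ s then
      H2 ⟨i.val / 2 ^ s, Nat.div_lt_of_lt_mul (Nat.lt_of_lt_of_eq i.isLt (pow_succ 2 s))⟩
        ⟨k.val / 2 ^ s, Nat.div_lt_of_lt_mul (Nat.lt_of_lt_of_eq k.isLt (pow_succ 2 s))⟩
    else 0

lemma perm_conj_apply {n : ℕ} {A : Matrix (Fin n) (Fin n) ℂ} {σ : Equiv.Perm (Fin n)}
    (hA : ∀ i k, A i k = if σ i = k then 1 else 0) (X : Matrix (Fin n) (Fin n) ℂ)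
    (i k : Fin n) : (A * X * Aᵀ) i k = X (σ i) (σ k) := by
  rw [mul_permT_apply hA, perm_mul_apply hA]

/-- The core shuffle computation:
`P̃_{2M} (I_M ⊗ H_2) P̃_{2M}ᵀ = H_2 ⊗ I_M` for `M = 2^s`. -/
lemma core_shuffle (s : ℕ) :
    oddEvenPerm (2 ^ (s + 1)) * IkronM (2 ^ (s + 1)) H2 *
      (oddEvenPerm (2 ^ (s + 1)))ᵀ = blk s := by
  have hM : (2 : ℕ) ^ (s + 1) % 2 = 0 ∨ (2 : ℕ) ^ (s + 1) = 1 := pow_hyp (s + 1)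
  have hpow : (2 : ℕ) ^ (s + 1) = 2 ^ s * 2 := pow_succ 2 s
  ext i k
  rw [perm_conj_apply (oddEvenPerm_entry _ hM) _ i k,
    IkronM_apply (by norm_num : (0:ℕ) < 2)]
  have key : ∀ j : Fin (2 ^ (s + 1)),
      (oeEquiv (2 ^ (s + 1)) hM j).val / 2 = j.val % 2 ^ s ∧
        (oeEquiv (2 ^ (s + 1)) hM j).val % 2 = j.val / 2 ^ s := by
    intro j
    have hj : j.val < 2 ^ s * 2 := Nat.lt_of_lt_of_eq j.isLt hpow
    rw [oeEquiv_val]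
    by_cases c : 2 * j.val < 2 ^ (s + 1)
    · rw [if_pos c]
      have hjlt : j.val < 2 ^ s := by omega
      constructor
      · rw [Nat.mod_eq_of_lt hjlt]; omega
      · rw [Nat.div_eq_of_lt hjlt]; omega
    · rw [if_neg c]
      have hjge : 2 ^ s ≤ j.val := by omega
      have hmod : j.val % 2 ^ s = j.val - 2 ^ s := by
        rw [Nat.mod_eq_sub_mod hjge, Nat.mod_eq_of_lt (by omega)]
      have hdiv : j.val / 2 ^ s = 1 :=
        Nat.div_eq_of_lt_le (by omega) (by omega)
      rw [hmod, hdiv]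
      omega
  obtain ⟨hi1, hi2⟩ := key i
  obtain ⟨hk1, hk2⟩ := key k
  rw [blk, Matrix.of_apply]
  have hH2 : (⟨(oeEquiv (2 ^ (s + 1)) hM i).val % 2, Nat.mod_lt _ (by norm_num)⟩ : Fin 2) =
      ⟨i.val / 2 ^ s, Nat.div_lt_of_lt_mul (Nat.lt_of_lt_of_eq i.isLt (pow_succ 2 s))⟩ :=
    Fin.ext hi2
  have hH2' : (⟨(oeEquiv (2 ^ (s + 1)) hM k).val % 2, Nat.mod_lt _ (by norm_num)⟩ : Fin 2) =
      ⟨k.val / 2 ^ s, Nat.div_lt_of_lt_mul (Nat.lt_of_lt_of_eq k.isLt (pow_succ 2 s))⟩ :=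
    Fin.ext hk2
  rw [hH2, hH2', hi1, hk1]

/-! ### kronF / castM toolkit -/

lemma castM_mul {m n : ℕ} (h : m = n) (A B : Matrix (Fin m) (Fin m) ℂ) :
    castM h (A * B) = castM h A * castM h B := by
  simp only [castM, Matrix.reindex_apply]
  rw [Matrix.submatrix_mul_equiv A B _ ((finCongr h).symm) _]

lemma castM_one {m n : ℕ} (h : m = n) : castM h (1 : Matrix (Fin m) (Fin m) ℂ) = 1 := by
  simp only [castM, Matrix.reindex_apply]
  exact Matrix.submatrix_one_equiv ((finCongr h).symm)

lemma kronF_mul {m n : ℕ} (A C : Matrix (Fin m) (Fin m) ℂ) (B D : Matrix (Fin n) (Fin n) ℂ) :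
    kronF A B * kronF C D = kronF (A * C) (B * D) := by
  simp only [kronF, Matrix.reindex_apply]
  rw [Matrix.submatrix_mul_equiv _ _ _ finProdFinEquiv.symm _, Matrix.mul_kronecker_mul]

lemma kronF_one_one {m n : ℕ} :
    kronF (1 : Matrix (Fin m) (Fin m) ℂ) (1 : Matrix (Fin n) (Fin n) ℂ) = 1 := by
  simp only [kronF, Matrix.reindex_apply, Matrix.one_kronecker_one]
  exact Matrix.submatrix_one_equiv finProdFinEquiv.symm

lemma castM_apply {m n : ℕ} (h : m = n) (A : Matrix (Fin m) (Fin m) ℂ) (i k : Fin n) :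
    castM h A i k = A ⟨i.val, h ▸ i.isLt⟩ ⟨k.val, h ▸ k.isLt⟩ := rfl

lemma kronF_apply {m n : ℕ} (hn : 0 < n) (A : Matrix (Fin m) (Fin m) ℂ)
    (B : Matrix (Fin n) (Fin n) ℂ) (i k : Fin (m * n)) :
    kronF A B i k =
      A ⟨i.val / n, Nat.div_lt_of_lt_mul (Nat.lt_of_lt_of_eq i.isLt (Nat.mul_comm m n))⟩
        ⟨k.val / n, Nat.div_lt_of_lt_mul (Nat.lt_of_lt_of_eq k.isLt (Nat.mul_comm m n))⟩ *
      B ⟨i.val % n, Nat.mod_lt _ hn⟩ ⟨k.val % n, Nat.mod_lt _ hn⟩ := rfl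

/-- `I_2 ⊗ X` (flattened) is `IkronM`. -/
lemma castM_kronF_one {L : ℕ} (h : 2 * 2 ^ L = 2 ^ (L + 1)) (X : Matrix (Fin (2 ^ L)) (Fin (2 ^ L)) ℂ) :
    castM h (kronF (1 : Matrix (Fin 2) (Fin 2) ℂ) X) = IkronM (2 ^ (L + 1)) X := by
  have hpos : 0 < (2 : ℕ) ^ L := Nat.pow_pos (n := L) (by norm_num)
  ext i k
  rw [castM_apply, kronF_apply hpos, IkronM_apply hpos, Matrix.one_apply]
  rcases eq_or_ne (i.val / 2 ^ L) (k.val / 2 ^ L) with hc | hc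
  · rw [if_pos (Fin.ext hc : _ = (⟨k.val / 2 ^ L, _⟩ : Fin 2)), if_pos hc, one_mul]
  · rw [if_neg (fun hcc => hc (by simpa [Fin.ext_iff] using hcc)), if_neg hc, zero_mul]

/-- `H2 ⊗ I_{2^L}` (flattened) is `blk L`. -/
lemma castM_kronF_H2_one {L : ℕ} (h : 2 * 2 ^ L = 2 ^ (L + 1)) :
    castM h (kronF H2 (1 : Matrix (Fin (2 ^ L)) (Fin (2 ^ L)) ℂ)) = blk L := by
  have hpos : 0 < (2 : ℕ) ^ L := Nat.pow_pos (n := L) (by norm_num)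
  ext i k
  rw [castM_apply, kronF_apply hpos, blk, Matrix.of_apply, Matrix.one_apply]
  rcases eq_or_ne (i.val % 2 ^ L) (k.val % 2 ^ L) with hc | hc
  · rw [if_pos (Fin.ext hc : _ = (⟨k.val % 2 ^ L, _⟩ : Fin (2 ^ L))), if_pos hc, mul_one]
  · rw [if_neg (fun hcc => hc (by simpa [Fin.ext_iff] using hcc)), if_neg hc, mul_zero]

lemma IkronM_list_prod {N M : ℕ} (hM : 0 < M) (hMN : M ∣ N)
    (l : List (Matrix (Fin M) (Fin M) ℂ)) :
    IkronM N l.prod = (l.map fun X => IkronM N X).prod := by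
  induction l with
  | nil => simpa using IkronM_one (N := N) hM
  | cons a t ih =>
    rw [List.prod_cons, ← IkronM_mul hM hMN, ih, List.map_cons, List.prod_cons]

/-! ### The Hadamard product formula -/

lemma hadamard_prod (L : ℕ) :
    hadamardMat L = ((List.range L).reverse.map fun j => IkronM (2 ^ L) (blk j)).prod := by
  induction L with
  | zero => simp [hadamardMat]
  | succ L ih =>
    have hpos : 0 < (2 : ℕ) ^ L := Nat.pow_pos (n := L) (by norm_num)
    have hdvd : (2 : ℕ) ^ L ∣ 2 ^ (L + 1) := pow_dvd_pow 2 (Nat.le_succ L)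
    rw [show hadamardMat (L + 1) =
      castM (by ring) (kronF H2 (hadamardMat L)) from rfl]
    rw [ih]
    rw [show kronF H2 (((List.range L).reverse.map fun j => IkronM (2 ^ L) (blk j)).prod) =
      kronF H2 (1 : Matrix (Fin (2 ^ L)) (Fin (2 ^ L)) ℂ) *
        kronF (1 : Matrix (Fin 2) (Fin 2) ℂ)
          (((List.range L).reverse.map fun j => IkronM (2 ^ L) (blk j)).prod) by
      rw [kronF_mul, mul_one, one_mul]]
    rw [castM_mul, castM_kronF_H2_one, castM_kronF_one,
      IkronM_list_prod hpos hdvd, List.map_map]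
    have hmap : ((List.range L).reverse.map
          ((fun X => IkronM (2 ^ (L + 1)) X) ∘ fun j => IkronM (2 ^ L) (blk j))) =
        ((List.range L).reverse.map fun j => IkronM (2 ^ (L + 1)) (blk j)) := by
      refine List.map_congr_left fun j hj => ?_
      have hjL : j < L := List.mem_range.1 (List.mem_reverse.1 hj)
      exact IkronM_IkronM (Nat.pow_pos (n := _) (by norm_num)) hpos
        (pow_dvd_pow 2 (by omega)) (blk j)
    rw [hmap]
    rw [List.range_succ, List.reverse_append, List.reverse_singleton, List.singleton_append,
      List.map_cons, List.prod_cons]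
    rw [IkronM_self (Nat.pow_pos (n := _) (by norm_num)) (blk L)]

lemma oddEvenPerm_le_two (M : ℕ) (hM : M ≤ 2) : oddEvenPerm M = 1 := by
  ext i k
  rw [oddEvenPerm, Matrix.of_apply, Matrix.one_apply]
  have hi := i.isLt
  have hk := k.isLt
  congr 1
  rw [eq_iff_iff, Fin.ext_iff]
  omega

/-- **Full layered decomposition of the Hadamard matrix** (Proposition 4):
`H_{2^L} = P_L·D·P_{L−1}·D·⋯·P_1·D·P_0` with the same block diagonal matrix
`D = I_{2^{L−1}} ⊗ H_2` in every layer; moreover all `P_ℓ` are permutation matrices. -/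
theorem hadamard_layered_decomposition (L : ℕ) (hL : 1 ≤ L) :
    hadamardMat L =
        ((List.finRange L).reverse.map fun i : Fin L =>
            hadP L (i.val + 1) * IkronM (2 ^ L) H2).prod
          * hadP L 0
    ∧ ∀ ℓ ≤ L, IsPermutationMatrix (hadP L ℓ) := by
  have hNpos : 0 < (2 : ℕ) ^ L := Nat.pow_pos (n := L) (by norm_num)
  have permQ : ∀ ℓ, ℓ ≤ L → IsPermutationMatrix (IkronM (2 ^ L) (oddEvenPerm (2 ^ ℓ))) :=
    fun ℓ h => IkronM_perm (Nat.pow_pos (n := ℓ) (by norm_num)) (pow_dvd_pow 2 h)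
      (oddEvenPerm_isPerm _ (pow_hyp ℓ))
  constructor
  · -- the decomposition
    obtain ⟨S, rfl⟩ : ∃ S, L = S + 1 := ⟨L - 1, by omega⟩
    -- `G`-fact : Q_{s+1} D Q_{s+1}ᵀ = I ⊗ blk s
    have Gfact : ∀ s, s + 1 ≤ S + 1 →
        IkronM (2 ^ (S + 1)) (oddEvenPerm (2 ^ (s + 1))) * IkronM (2 ^ (S + 1)) H2 *
          (IkronM (2 ^ (S + 1)) (oddEvenPerm (2 ^ (s + 1))))ᵀ =
        IkronM (2 ^ (S + 1)) (blk s) := by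
      intro s hs
      have hpos : 0 < (2 : ℕ) ^ (s + 1) := Nat.pow_pos (n := _) (by norm_num)
      have hdvd : (2 : ℕ) ^ (s + 1) ∣ 2 ^ (S + 1) := pow_dvd_pow 2 hs
      have h2 : (2 : ℕ) ∣ 2 ^ (s + 1) := dvd_pow_self 2 (Nat.succ_ne_zero s)
      rw [show IkronM (2 ^ (S + 1)) H2 = IkronM (2 ^ (S + 1)) (IkronM (2 ^ (s + 1)) H2) from
        (IkronM_IkronM (by norm_num) hpos h2 H2).symm]
      rw [← IkronM_transpose hpos, IkronM_mul hpos hdvd, IkronM_mul hpos hdvd,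
        core_shuffle s]
    -- telescoping
    have tele : ∀ m, m ≤ S →
        (((List.range m).reverse.map fun j =>
            hadP (S + 1) (j + 1) * IkronM (2 ^ (S + 1)) H2).prod)
          = (IkronM (2 ^ (S + 1)) (oddEvenPerm (2 ^ (m + 1))))ᵀ *
            ((List.range m).reverse.map fun j => IkronM (2 ^ (S + 1)) (blk j)).prod := by
      intro m
      induction m with
      | zero =>
        intro _
        rw [oddEvenPerm_le_two _ (by norm_num), IkronM_one (by norm_num : (0:ℕ) < 2 ^ (0 + 1))]
        simp
      | succ m ihm =>
        intro hm
        rw [List.range_succ, List.reverse_append, List.reverse_singleton,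
          List.singleton_append, List.map_cons, List.prod_cons, List.map_cons,
          List.prod_cons, ihm (by omega)]
        rw [show hadP (S + 1) (m + 1) =
          IkronM (2 ^ (S + 1)) ((oddEvenPerm (2 ^ (m + 1 + 1)))ᵀ) *
            IkronM (2 ^ (S + 1)) (oddEvenPerm (2 ^ (m + 1))) from by
          rw [hadP, if_neg (by omega)]]
        calc IkronM (2 ^ (S + 1)) ((oddEvenPerm (2 ^ (m + 1 + 1)))ᵀ) *
              IkronM (2 ^ (S + 1)) (oddEvenPerm (2 ^ (m + 1))) * IkronM (2 ^ (S + 1)) H2 *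
              ((IkronM (2 ^ (S + 1)) (oddEvenPerm (2 ^ (m + 1))))ᵀ *
                ((List.range m).reverse.map fun j => IkronM (2 ^ (S + 1)) (blk j)).prod)
            = IkronM (2 ^ (S + 1)) ((oddEvenPerm (2 ^ (m + 1 + 1)))ᵀ) *
              (IkronM (2 ^ (S + 1)) (oddEvenPerm (2 ^ (m + 1))) * IkronM (2 ^ (S + 1)) H2 *
                (IkronM (2 ^ (S + 1)) (oddEvenPerm (2 ^ (m + 1))))ᵀ) *
              ((List.range m).reverse.map fun j => IkronM (2 ^ (S + 1)) (blk j)).prod := by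
              rw [mul_assoc, mul_assoc, mul_assoc, mul_assoc, mul_assoc]
          _ = IkronM (2 ^ (S + 1)) ((oddEvenPerm (2 ^ (m + 1 + 1)))ᵀ) *
              IkronM (2 ^ (S + 1)) (blk m) *
              ((List.range m).reverse.map fun j => IkronM (2 ^ (S + 1)) (blk j)).prod := by
              rw [Gfact m (by omega)]
          _ = _ := by rw [IkronM_transpose (Nat.pow_pos (n := _) (by norm_num)), mul_assoc]
    -- convert the `finRange` list to a `range` list
    have hconv : ((List.finRange (S + 1)).reverse.map fun i : Fin (S + 1) =>
          hadP (S + 1) (i.val + 1) * IkronM (2 ^ (S + 1)) H2) =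
        ((List.range (S + 1)).reverse.map fun j =>
          hadP (S + 1) (j + 1) * IkronM (2 ^ (S + 1)) H2) := by
      rw [← (show (List.finRange (S + 1)).map Fin.val = List.range (S + 1) from
          List.ext_getElem (by simp) (by simp)), ← List.map_reverse (f := Fin.val) (l := List.finRange (S + 1)),
        List.map_map]
      rfl
    rw [hconv]
    -- peel off the top layer and use the telescoped form
    rw [List.range_succ, List.reverse_append, List.reverse_singleton,
      List.singleton_append, List.map_cons, List.prod_cons, tele S (le_refl S)]
    rw [show hadP (S + 1) (S + 1) = IkronM (2 ^ (S + 1)) (oddEvenPerm (2 ^ (S + 1))) from by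
      rw [hadP, if_pos rfl]; exact (IkronM_self hNpos _).symm]
    rw [show hadP (S + 1) 0 = 1 from by
      rw [hadP, if_neg (by omega), oddEvenPerm_le_two _ (by norm_num),
        oddEvenPerm_le_two _ (by norm_num), Matrix.transpose_one,
        IkronM_one (by norm_num : (0:ℕ) < 2 ^ (0 + 1)),
        IkronM_one (by norm_num : (0:ℕ) < 2 ^ 0), one_mul]]
    rw [mul_one, ← mul_assoc, Gfact S (le_refl _)]
    rw [hadamard_prod (S + 1), List.range_succ, List.reverse_append,
      List.reverse_singleton, List.singleton_append, List.map_cons, List.prod_cons]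
  · -- permutation matrices
    intro ℓ hℓ
    by_cases h : ℓ = L
    · subst h
      rw [hadP, if_pos rfl]
      exact oddEvenPerm_isPerm _ (pow_hyp ℓ)
    · rw [hadP, if_neg h]
      refine IsPermutationMatrix.mul' ?_ ?_
      · rw [IkronM_transpose (Nat.pow_pos (n := _) (by norm_num))]
        exact (permQ (ℓ + 1) (by omega)).transpose'
      · exact permQ ℓ (by omega)
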